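/- Fix an ordered set partition S = (B_1,...,B_ℓ) of [n]. The polytope Δ_S in H_n defined by the conditions x_i = x_j for i,j in the same block B_k; x_i ≥ x_j for i ∈ B_k, j ∈ B_{k+1} (1 ≤ k ≤ ℓ-1); and x_i ≥ x_j − 1 for i ∈ B_ℓ, j ∈ B_1, is a simplex of dimension ℓ − 1. -/

import Mathlib

open Finset


/-- For an ordered set partition `(B 0, ..., B ℓ)` of `[n]` (with `ℓ + 1` blocks),
the alcoved polytope `Δ_S` in `H_n` is a simplex of dimension `ℓ`: it is the convex
hull of `ℓ + 1` affinely independent points. -/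
theorem stmt7 {n ℓ : ℕ} (hn : 0 < n)
    (B : Fin (ℓ + 1) → Finset (Fin n))
    (hdisj : ∀ k k' : Fin (ℓ + 1), k ≠ k' → Disjoint (B k) (B k'))
    (hne : ∀ k, (B k).Nonempty)
    (hcover : ∀ i : Fin n, ∃ k, i ∈ B k) :
    ∃ V : Fin (ℓ + 1) → (Fin n → ℝ), AffineIndependent ℝ V ∧
      {x : Fin n → ℝ | (∑ i, x i) = 0 ∧
          (∀ k : Fin (ℓ + 1), ∀ i ∈ B k, ∀ j ∈ B k, x i = x j) ∧
          (∀ k : Fin ℓ, ∀ i ∈ B k.castSucc, ∀ j ∈ B k.succ, x j ≤ x i) ∧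
          (∀ i ∈ B (Fin.last ℓ), ∀ j ∈ B 0, x j - 1 ≤ x i)} =
        convexHull ℝ (Set.range V) := by
  classical
  have hn' : (n : ℝ) ≠ 0 := Nat.cast_ne_zero.mpr hn.ne'
  obtain ⟨κ, hκ⟩ : ∃ κ : Fin n → Fin (ℓ+1), ∀ i, i ∈ B (κ i) :=
    ⟨fun i => (hcover i).choose, fun i => (hcover i).choose_spec⟩
  have hκeq : ∀ {i k}, i ∈ B k → κ i = k := by
    intro i k hik
    by_contra h
    exact (Finset.disjoint_left.mp (hdisj _ _ h) (hκ i)) hik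
  have hκsurj : Function.Surjective κ := fun k => ⟨(hne k).choose, hκeq (hne k).choose_spec⟩
  set a : Fin (ℓ+1) → ℝ :=
    fun t => ((univ.filter (fun i => t < κ i)).card : ℝ) / n with ha
  set W : Fin (ℓ+1) → Fin (ℓ+1) → ℝ :=
    (fun t k => a t - (if t < k then 1 else 0)) with hWdef
  set V : Fin (ℓ+1) → Fin n → ℝ := fun t i => W t (κ i) with hVdef
  have halast : a (Fin.last ℓ) = 0 := by
    have : (univ.filter (fun i => Fin.last ℓ < κ i)) = ∅ := by
      refine filter_eq_empty_iff.mpr ?_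
      intro i _
      exact not_lt.mpr (Fin.le_last _)
    simp [ha, this]
  -- sum of each vertex is 0
  have hsumV : ∀ t, (∑ i, V t i) = 0 := by
    intro t
    have : (∑ i, V t i) = (n : ℝ) * a t - ((univ.filter (fun i => t < κ i)).card : ℝ) := by
      simp [hVdef, hWdef, Finset.sum_sub_distrib, Finset.sum_boole, mul_comm]
    rw [this, ha]
    field_simp
    ring
  refine ⟨V, ?_, ?_⟩
  · -- affine independence
    have hWai : AffineIndependent ℝ W := by
      rw [affineIndependent_iff_linearIndependent_vsub ℝ W (Fin.last ℓ)]
      set Φ : (Fin (ℓ+1) → ℝ) →ₗ[ℝ] (Fin ℓ → ℝ) :=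
        { toFun := fun f s => f s.castSucc - f s.succ
          map_add' := by intros; funext s; simp; ring
          map_smul' := by intros; funext s; simp; ring } with hΦ
      apply LinearIndependent.of_comp Φ
      have key : (⇑Φ ∘ fun t : {x : Fin (ℓ+1) // x ≠ Fin.last ℓ} => W ↑t -ᵥ W (Fin.last ℓ))
          = ⇑(Pi.basisFun ℝ (Fin ℓ)) ∘ (fun t : {x : Fin (ℓ+1) // x ≠ Fin.last ℓ} =>
              (t : Fin (ℓ+1)).castPred t.2) := by
        funext t
        funext s
        have hs := s.isLt
        have ht := (t : Fin (ℓ+1)).isLt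
        simp only [Function.comp_apply, vsub_eq_sub, Pi.sub_apply, hΦ, LinearMap.coe_mk,
          AddHom.coe_mk, hWdef, Pi.basisFun_apply, Pi.single_apply, Fin.lt_def, Fin.coe_castSucc,
          Fin.val_succ, Fin.val_last, halast, Fin.ext_iff, Fin.coe_castPred]
        split_ifs <;> first | omega | ring
      rw [key]
      exact (Pi.basisFun ℝ (Fin ℓ)).linearIndependent.comp _
        (fun x y h => Subtype.ext (Fin.castPred_inj.mp h))
    have hinj : Function.Injective ⇑(LinearMap.funLeft ℝ ℝ κ).toAffineMap := by
      rw [LinearMap.coe_toAffineMap]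
      exact LinearMap.funLeft_injective_of_surjective ℝ ℝ κ hκsurj
    have hmap := hWai.map' (LinearMap.funLeft ℝ ℝ κ).toAffineMap hinj
    have hVW : V = ⇑(LinearMap.funLeft ℝ ℝ κ).toAffineMap ∘ W := by
      funext t i
      simp [hVdef, LinearMap.funLeft_apply]
    rwa [hVW]
  · -- set equality
    apply Set.Subset.antisymm
    · -- polytope ⊆ convex hull
      rintro x ⟨hsum, heqb, hmono, hlastineq⟩
      set y : Fin (ℓ+1) → ℝ := fun k => x ((hne k).choose) with hy
      have hrep : ∀ k, (hne k).choose ∈ B k := fun k => (hne k).choose_spec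
      have hxy : ∀ i, x i = y (κ i) := fun i => heqb (κ i) i (hκ i) _ (hrep (κ i))
      have hmono' : ∀ s : Fin ℓ, y s.succ ≤ y s.castSucc :=
        fun s => hmono s _ (hrep _) _ (hrep _)
      have hlast' : y 0 - 1 ≤ y (Fin.last ℓ) := hlastineq _ (hrep _) _ (hrep _)
      set w : Fin (ℓ+1) → ℝ := Fin.lastCases (1 - (y 0 - y (Fin.last ℓ)))
        (fun s => y s.castSucc - y s.succ) with hw
      have hwcast : ∀ s : Fin ℓ, w s.castSucc = y s.castSucc - y s.succ := by
        intro s; rw [hw]; exact Fin.lastCases_castSucc s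
      have hwlast : w (Fin.last ℓ) = 1 - (y 0 - y (Fin.last ℓ)) := by
        rw [hw]; exact Fin.lastCases_last
      have hwnn : ∀ t, 0 ≤ w t := by
        intro t
        induction t using Fin.lastCases with
        | last => rw [hwlast]; linarith
        | cast s => rw [hwcast]; linarith [hmono' s]
      have hpartial : ∀ k : Fin (ℓ+1), ∑ t ∈ univ.filter (· < k), w t = y 0 - y k := by
        intro k
        induction k using Fin.induction with
        | zero =>
            have : (univ.filter (· < (0 : Fin (ℓ+1)))) = ∅ := by
              refine filter_eq_empty_iff.mpr fun t _ => Fin.not_lt_zero t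
            simp [this]
        | succ s ih =>
            have hset : univ.filter (· < s.succ)
                = insert s.castSucc (univ.filter (· < s.castSucc)) := by
              ext u
              simp only [mem_filter, mem_univ, true_and, mem_insert, Fin.lt_def,
                Fin.val_succ, Fin.coe_castSucc, Fin.ext_iff]
              omega
            rw [hset, Finset.sum_insert (by simp [Fin.lt_def]), hwcast, ih]
            ring
      have hwsum : ∑ t, w t = 1 := by
        have huniv : (univ : Finset (Fin (ℓ+1)))
            = insert (Fin.last ℓ) (univ.filter (· < Fin.last ℓ)) := by
          ext u
          have := u.isLt
          simp only [mem_univ, mem_insert, mem_filter, true_and, Fin.lt_def, Fin.val_last,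
            Fin.ext_iff, true_iff]
          omega
        rw [huniv, Finset.sum_insert (by simp [Fin.lt_def]), hwlast, hpartial]
        ring
      -- the convex combination
      have hz : ∀ i, (∑ t, w t • V t) i = (∑ t, w t * a t) - (y 0 - y (κ i)) := by
        intro i
        rw [← hpartial (κ i)]
        simp only [Finset.sum_apply, Pi.smul_apply, smul_eq_mul, hVdef, hWdef,
          mul_sub, Finset.sum_sub_distrib, mul_ite, mul_one, mul_zero]
        rw [← Finset.sum_filter]
      have hzsum : ∑ i, (∑ t, w t • V t) i = 0 := by
        simp only [Finset.sum_apply, Pi.smul_apply, smul_eq_mul]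
        rw [Finset.sum_comm]
        simp [← Finset.mul_sum, hsumV]
      have hC : (∑ t, w t * a t) = y 0 := by
        have h0 : ∑ i, (x i - (∑ t, w t • V t) i) = 0 := by
          rw [Finset.sum_sub_distrib, hsum, hzsum]; ring
        have h1 : ∑ i, (x i - (∑ t, w t • V t) i)
            = (n : ℝ) * (y 0 - ∑ t, w t * a t) := by
          have : ∀ i, x i - (∑ t, w t • V t) i = y 0 - ∑ t, w t * a t := by
            intro i
            rw [hz i, hxy i]; ring
          rw [Finset.sum_congr rfl (fun i _ => this i)]
          simp [Finset.card_univ, mul_comm]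
          ring
        rw [h1] at h0
        rcases mul_eq_zero.mp h0 with h | h
        · exact absurd h hn'
        · linarith
      have hxeq : x = ∑ t, w t • V t := by
        funext i
        rw [hxy i]
        rw [hz i, hC]
        ring
      rw [hxeq, ← Finset.centerMass_eq_of_sum_1 univ V hwsum]
      exact Finset.centerMass_mem_convexHull univ (fun t _ => hwnn t)
        (by rw [hwsum]; norm_num) (fun t _ => Set.mem_range_self t)
    · -- convex hull ⊆ polytope
      apply convexHull_min
      · rintro _ ⟨t, rfl⟩
        refine ⟨hsumV t, ?_, ?_, ?_⟩
        · intro k i hi j hj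
          simp [hVdef, hκeq hi, hκeq hj]
        · intro k i hi j hj
          have hks : t < k.castSucc → t < k.succ := fun h => h.trans Fin.castSucc_lt_succ
          simp only [hVdef, hWdef, hκeq hi, hκeq hj]
          split_ifs <;> first | linarith | exact absurd (hks ‹_›) ‹_›
        · intro i hi j hj
          simp only [hVdef, hWdef, hκeq hi, hκeq hj, Fin.not_lt_zero, if_false]
          split_ifs <;> linarith
      · rintro x ⟨hx1, hx2, hx3, hx4⟩ z ⟨hz1, hz2, hz3, hz4⟩ p q hp hq hpq
        refine ⟨?_, ?_, ?_, ?_⟩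
        · simp only [Pi.add_apply, Pi.smul_apply, smul_eq_mul, Finset.sum_add_distrib,
            ← Finset.mul_sum, hx1, hz1]
          ring
        · intro k i hi j hj
          simp only [Pi.add_apply, Pi.smul_apply, smul_eq_mul]
          rw [hx2 k i hi j hj, hz2 k i hi j hj]
        · intro k i hi j hj
          have h1 := hx3 k i hi j hj
          have h2 := hz3 k i hi j hj
          simp only [Pi.add_apply, Pi.smul_apply, smul_eq_mul]
          nlinarith
        · intro i hi j hj
          have h1 := hx4 i hi j hj
          have h2 := hz4 i hi j hj
          simp only [Pi.add_apply, Pi.smul_apply, smul_eq_mul]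
          nlinarith
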